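/- Let N be a positive natural number and V = Fin N → ℝ with weighted inner product ⟨f,g⟩ = w·Σ_i f i·g i (w > 0), pointwise product *, and constant-one function 𝟙. Let Δh : V →ₗ[ℝ] V be symmetric with respect to ⟨·,·⟩ and set G = Δh∘Δh + 2a·Δh + α·id for real parameters a, α. Let Δt ∈ ℝ, M̄, q̄, φⁿ, φⁿ⁺¹, qⁿ, qⁿ⁺¹ ∈ V with ⟨M̄,𝟙⟩ ≠ 0, and suppose: μ = G((φⁿ + φⁿ⁺¹)/2) + (1/2)·((qⁿ + qⁿ⁺¹)/2)*q̄, L = ⟨M̄,μ⟩/⟨M̄,𝟙⟩, φⁿ⁺¹ - φⁿ = -Δt·(M̄*(μ - L·𝟙)), and qⁿ⁺¹ - qⁿ = q̄*(φⁿ⁺¹ - φⁿ). Define the discrete energy Fᵏ = (1/2)⟨φᵏ, Gφᵏ⟩ + (1/4)⟨qᵏ,qᵏ⟩ for k = n, n+1. Then Fⁿ⁺¹ - Fⁿ = -Δt·⟨μ - L·𝟙, M̄*(μ - L·𝟙)⟩ (Theorem 4.3 of the paper: discrete energy dissipation law of the fully discrete EQ scheme for the Allen–Cahn model with a Lagrange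 multiplier). -/
import Mathlib


/-- Theorem 4.3: discrete energy dissipation law of the fully discrete EQ
scheme for the Allen–Cahn model with a Lagrange multiplier. -/
theorem discrete_energy_dissipation_AC_Lagrange_EQ
    (N : ℕ) (hN : 0 < N) (w : ℝ) (hw : 0 < w)
    (ip : (Fin N → ℝ) → (Fin N → ℝ) → ℝ)
    (hip : ∀ f g, ip f g = w * ∑ i, f i * g i)
    (one : Fin N → ℝ) (hone : one = fun _ => 1)
    (Δh : (Fin N → ℝ) →ₗ[ℝ] (Fin N → ℝ))
    (hsym : ∀ f g, ip (Δh f) g = ip f (Δh g))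
    (a α : ℝ) (G : (Fin N → ℝ) → (Fin N → ℝ))
    (hG : ∀ f, G f = Δh (Δh f) + (2 * a) • Δh f + α • f)
    (Δt : ℝ) (Mbar qbar phin phin1 qn qn1 mu : Fin N → ℝ)
    (hM : ip Mbar one ≠ 0)
    (hmu : mu = G ((1 / 2 : ℝ) • (phin + phin1)) +
      (1 / 2 : ℝ) • (((1 / 2 : ℝ) • (qn + qn1)) * qbar))
    (L : ℝ) (hL : L = ip Mbar mu / ip Mbar one)
    (hphi : phin1 - phin = (-Δt) • (Mbar * (mu - L • one)))
    (hq : qn1 - qn = qbar * (phin1 - phin))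
    (Fn Fn1 : ℝ)
    (hFn : Fn = (1 / 2) * ip phin (G phin) + (1 / 4) * ip qn qn)
    (hFn1 : Fn1 = (1 / 2) * ip phin1 (G phin1) + (1 / 4) * ip qn1 qn1) :
    Fn1 - Fn = -Δt * ip (mu - L • one) (Mbar * (mu - L • one)) := by
  -- basic bilinearity facts
  have ipsymm : ∀ f g, ip f g = ip g f := by
    intro f g; simp [hip, mul_comm]
  have ipaddl : ∀ f g h, ip (f + g) h = ip f h + ip g h := by
    intro f g h
    simp only [hip, Pi.add_apply, add_mul, Finset.sum_add_distrib, mul_add]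
  have ipsubl : ∀ f g h, ip (f - g) h = ip f h - ip g h := by
    intro f g h
    simp only [hip, Pi.sub_apply, sub_mul, Finset.sum_sub_distrib, mul_sub]
  have ipsmull : ∀ (c : ℝ) f g, ip (c • f) g = c * ip f g := by
    intro c f g
    simp only [hip, Pi.smul_apply, smul_eq_mul, Finset.mul_sum]
    exact Finset.sum_congr rfl fun i _ => by ring
  have ipaddr : ∀ f g h, ip f (g + h) = ip f g + ip f h := by
    intro f g h; rw [ipsymm, ipaddl, ipsymm g f, ipsymm h f]
  have ipsubr : ∀ f g h, ip f (g - h) = ip f g - ip f h := by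
    intro f g h; rw [ipsymm, ipsubl, ipsymm g f, ipsymm h f]
  have ipsmulr : ∀ (c : ℝ) f g, ip f (c • g) = c * ip f g := by
    intro c f g; rw [ipsymm, ipsmull, ipsymm g f]
  have ipmul : ∀ f g h : Fin N → ℝ, ip f (g * h) = ip (f * g) h := by
    intro f g h
    simp only [hip, Pi.mul_apply, mul_assoc]
  -- G is symmetric and additive
  have hGsym : ∀ f g, ip (G f) g = ip f (G g) := by
    intro f g
    rw [hG f, hG g, ipaddl, ipaddl, ipaddr, ipaddr, ipsmull, ipsmulr, ipsmull,
      ipsmulr, hsym, hsym, hsym]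
  have hGadd : ∀ f g, G (f + g) = G f + G g := by
    intro f g
    simp only [hG, map_add, smul_add]
    abel
  have hGsmul : ∀ (c : ℝ) f, G (c • f) = c • G f := by
    intro c f
    simp only [hG, map_smul, smul_comm c, smul_add]
  -- difference of quadratic forms
  have key1 : ip phin1 (G phin1) - ip phin (G phin)
      = ip (G (phin + phin1)) (phin1 - phin) := by
    rw [hGadd, ipaddl, ipsubr, ipsubr, hGsym phin phin1, ipsymm (G phin1) phin,
      hGsym phin1, ipsymm phin1 (G phin1), ipsymm phin (G phin)]
    ring
  have key2 : ip qn1 qn1 - ip qn qn = ip (qn + qn1) (qn1 - qn) := by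
    rw [ipaddl, ipsubr, ipsubr, ipsymm qn qn1]
    ring
  -- energy difference equals ip mu (phin1 - phin)
  have key3 : Fn1 - Fn = ip mu (phin1 - phin) := by
    rw [hFn, hFn1, hmu, ipaddl, hGsmul, ipsmull, ipsmull, ← ipmul, ← hq,
      ipsmull, ← key1, ← key2]
    ring
  -- orthogonality: ip Mbar (mu - L • one) = 0
  have horth : ip Mbar (mu - L • one) = 0 := by
    rw [ipsubr, ipsmulr, hL, div_mul_cancel₀ _ hM, sub_self]
  have hone_mul : one * Mbar = Mbar := by
    ext i; simp [hone]
  -- conclude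
  rw [key3, hphi, ipsmulr]
  have hx : ip one (Mbar * (mu - L • one)) = ip Mbar (mu - L • one) := by
    rw [ipmul, hone_mul]
  have hmain : ip mu (Mbar * (mu - L • one))
      = ip (mu - L • one) (Mbar * (mu - L • one)) := by
    rw [ipsubl, ipsmull, hx, horth]
    ring
  rw [hmain]
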